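/- arXiv:1103.4007 — 5 statements merged into one kernel-verified Lean document; each statement's English description precedes it below -/
import Mathlib

section
/- Let M₁, M₂, Z₁, Z₂ be nonempty finite sets, n ≥ 1, and let p be a probability mass function on M₁ × M₂ × Z₁ⁿ × Z₂ⁿ of the form p(m₁, m₂, z₁ⁿ, z₂ⁿ) = p₁(m₁) · p₂(m₂) · ∏_{i=1}^n q_i(z_{1,i} | z₂^{i-1}, m₁) · ∏_{i=1}^n r_i(z_{2,i} | z₁^{i-1}, m₂), where p₁, p₂ are pmfs and each q_i(· | z₂^{i-1}, m₁) and r_i(· | z₁^{i-1}, m₂) is a pmf for every value of its conditioning arguments. Then M₁ and M₂ are conditionally independent given (Z₁ⁿ, Z₂ⁿ): for all m₁, m₂, z₁ⁿ, z₂ⁿ, p(m₁, m₂, z₁ⁿ, z₂ⁿ) · p_{Z₁ⁿ,Z₂ⁿ}(z₁ⁿ, z₂ⁿ) = p_{M₁,Z₁ⁿ,Z₂ⁿ}(m₁, z₁ⁿ, z₂ⁿ) · p_{M₂,Z₁ⁿ,Z₂ⁿ}(m₂, z₁ⁿ, z₂ⁿ). -/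
open Finset

/-- If a pmf `p` on `M₁ × M₂ × Z₁ⁿ × Z₂ⁿ` factors as
`p(m₁,m₂,z₁ⁿ,z₂ⁿ) = p₁(m₁)·p₂(m₂)·∏ᵢ qᵢ(z₁ᵢ | z₂^{i-1}, m₁)·∏ᵢ rᵢ(z₂ᵢ | z₁^{i-1}, m₂)`,
where each conditional `qᵢ, rᵢ` is a pmf depending on the other sequence only through its
strict prefix, then `M₁` and `M₂` are conditionally independent given `(Z₁ⁿ, Z₂ⁿ)`:
`p(m₁,m₂,z₁,z₂)·p(z₁,z₂) = p(m₁,z₁,z₂)·p(m₂,z₁,z₂)` where the marginals are obtained by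
summing out the omitted message coordinates. -/
theorem messages_condIndep_given_cribbing
    {M₁ M₂ Z₁ Z₂ : Type*} [Fintype M₁] [Fintype M₂] [Fintype Z₁] [Fintype Z₂]
    [Nonempty M₁] [Nonempty M₂] [Nonempty Z₁] [Nonempty Z₂]
    (n : ℕ) (hn : 1 ≤ n)
    (p : M₁ → M₂ → (Fin n → Z₁) → (Fin n → Z₂) → ℝ)
    (p₁ : M₁ → ℝ) (p₂ : M₂ → ℝ)
    (q : Fin n → Z₁ → (Fin n → Z₂) → M₁ → ℝ)
    (r : Fin n → Z₂ → (Fin n → Z₁) → M₂ → ℝ)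
    (hp₁0 : ∀ m₁, 0 ≤ p₁ m₁) (hp₁1 : ∑ m₁, p₁ m₁ = 1)
    (hp₂0 : ∀ m₂, 0 ≤ p₂ m₂) (hp₂1 : ∑ m₂, p₂ m₂ = 1)
    (hq0 : ∀ i z z₂ m₁, 0 ≤ q i z z₂ m₁)
    (hq1 : ∀ i z₂ m₁, ∑ z, q i z z₂ m₁ = 1)
    (hqpre : ∀ (i : Fin n) z z₂ z₂' m₁, (∀ j : Fin n, (j : ℕ) < (i : ℕ) → z₂ j = z₂' j) →
      q i z z₂ m₁ = q i z z₂' m₁)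
    (hr0 : ∀ i z z₁ m₂, 0 ≤ r i z z₁ m₂)
    (hr1 : ∀ i z₁ m₂, ∑ z, r i z z₁ m₂ = 1)
    (hrpre : ∀ (i : Fin n) z z₁ z₁' m₂, (∀ j : Fin n, (j : ℕ) < (i : ℕ) → z₁ j = z₁' j) →
      r i z z₁ m₂ = r i z z₁' m₂)
    (hp : ∀ m₁ m₂ z₁ z₂, p m₁ m₂ z₁ z₂ =
      p₁ m₁ * p₂ m₂ * (∏ i, q i (z₁ i) z₂ m₁) * (∏ i, r i (z₂ i) z₁ m₂)) :
    ∀ (m₁ : M₁) (m₂ : M₂) (z₁ : Fin n → Z₁) (z₂ : Fin n → Z₂),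
      p m₁ m₂ z₁ z₂ * (∑ a : M₁, ∑ b : M₂, p a b z₁ z₂)
        = (∑ b : M₂, p m₁ b z₁ z₂) * (∑ a : M₁, p a m₂ z₁ z₂) := by
  intro m₁ m₂ z₁ z₂
  have key : ∀ a b, p a b z₁ z₂ =
      (p₁ a * ∏ i, q i (z₁ i) z₂ a) * (p₂ b * ∏ i, r i (z₂ i) z₁ b) := fun a b => by
    rw [hp]; ring
  simp only [key, ← Finset.sum_mul, ← Finset.mul_sum]
  ring
end

section
/- Let M₁, M₂, Z₁, Z₂ be nonempty finite sets, n ≥ 1, and let p be a probability mass function on M₁ × M₂ × Z₁ⁿ × Z₂ⁿ of the form p(m₁, m₂, z₁ⁿ, z₂ⁿ) = p₁(m₁) · p₂(m₂) · ∏_{i=1}^n q_i(z_{1,i} | z₂^{i-1}, m₁) · ∏_{i=1}^n r_i(z_{2,i} | z₁^{i-1}, m₂), where p₁, p₂ are pmfs and each q_i(· | z₂^{i-1}, m₁) and r_i(· | z₁^{i-1}, m₂) is a pmf for every value of its conditioning arguments. Then for every pair of indices 0 ≤ t ≤ s ≤ n with s ≤ t + 1, M₁ and M₂ are conditionally independent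 given (Z₁^s, Z₂^t): for all m₁, m₂, z₁^s, z₂^t, p_{M₁,M₂,Z₁^s,Z₂^t}(m₁, m₂, z₁^s, z₂^t) · p_{Z₁^s,Z₂^t}(z₁^s, z₂^t) = p_{M₁,Z₁^s,Z₂^t}(m₁, z₁^s, z₂^t) · p_{M₂,Z₁^s,Z₂^t}(m₂, z₁^s, z₂^t). -/
open Finset

/-- Marginal pmf of `(M₁, M₂, Z₁^s, Z₂^t)`: the probability that the messages equal
`(m₁, m₂)` and the sequences `Z₁ⁿ, Z₂ⁿ` agree with `w₁` on indices `< s` and with `w₂`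
on indices `< t` (the remaining coordinates are summed out). -/
noncomputable def prefixMarginal {M₁ M₂ Z₁ Z₂ : Type*}
    [Fintype Z₁] [Fintype Z₂] {n : ℕ}
    (p : M₁ → M₂ → (Fin n → Z₁) → (Fin n → Z₂) → ℝ)
    (s t : ℕ) (m₁ : M₁) (m₂ : M₂) (w₁ : Fin n → Z₁) (w₂ : Fin n → Z₂) : ℝ :=
  haveI := Classical.propDecidable
  ∑ z₁ : Fin n → Z₁, ∑ z₂ : Fin n → Z₂,
    if (∀ j : Fin n, (j : ℕ) < s → z₁ j = w₁ j) ∧ (∀ j : Fin n, (j : ℕ) < t → z₂ j = w₂ j)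
    then p m₁ m₂ z₁ z₂ else 0

lemma prefixMarginal_base {M₁ M₂ Z₁ Z₂ : Type*}
    [Fintype Z₁] [Fintype Z₂] {n : ℕ}
    (p : M₁ → M₂ → (Fin n → Z₁) → (Fin n → Z₂) → ℝ)
    (m₁ : M₁) (m₂ : M₂) (w₁ : Fin n → Z₁) (w₂ : Fin n → Z₂) :
    prefixMarginal p n n m₁ m₂ w₁ w₂ = p m₁ m₂ w₁ w₂ := by
  classical
  have h : ∀ (z₁ : Fin n → Z₁) (z₂ : Fin n → Z₂),
      ((∀ j : Fin n, (j : ℕ) < n → z₁ j = w₁ j) ∧ (∀ j : Fin n, (j : ℕ) < n → z₂ j = w₂ j))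
        ↔ (z₁ = w₁ ∧ z₂ = w₂) := by
    intro z₁ z₂
    constructor
    · rintro ⟨h1, h2⟩
      exact ⟨funext fun j => h1 j j.isLt, funext fun j => h2 j j.isLt⟩
    · rintro ⟨rfl, rfl⟩
      exact ⟨fun _ _ => rfl, fun _ _ => rfl⟩
  unfold prefixMarginal
  trans (∑ z₁ : Fin n → Z₁, ∑ z₂ : Fin n → Z₂, if z₁ = w₁ ∧ z₂ = w₂ then p m₁ m₂ z₁ z₂ else 0)
  · refine Finset.sum_congr ?_ fun z₁ _ => Finset.sum_congr ?_ fun z₂ _ => ?_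
    · congr!
    · congr!
    · by_cases hc : z₁ = w₁ ∧ z₂ = w₂
      · rw [if_pos ((h z₁ z₂).mpr hc), if_pos hc]
      · rw [if_neg (fun hh => hc ((h z₁ z₂).mp hh)), if_neg hc]
  · have inner : ∀ z₁ : Fin n → Z₁,
        (∑ z₂ : Fin n → Z₂, if z₁ = w₁ ∧ z₂ = w₂ then p m₁ m₂ z₁ z₂ else 0)
          = if z₁ = w₁ then p m₁ m₂ z₁ w₂ else 0 := by
      intro z₁
      by_cases hz : z₁ = w₁
      · subst hz; simp
      · simp [hz]
    simp only [inner]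
    simp

lemma prefixMarginal_peel₂ {M₁ M₂ Z₁ Z₂ : Type*}
    [Fintype Z₁] [Fintype Z₂] {n : ℕ}
    (p : M₁ → M₂ → (Fin n → Z₁) → (Fin n → Z₂) → ℝ)
    (u v : ℕ) (hv : v < n)
    (m₁ : M₁) (m₂ : M₂) (w₁ : Fin n → Z₁) (w₂ : Fin n → Z₂) :
    prefixMarginal p u v m₁ m₂ w₁ w₂
      = ∑ b : Z₂, prefixMarginal p u (v + 1) m₁ m₂ w₁ (Function.update w₂ ⟨v, hv⟩ b) := by
  classical
  unfold prefixMarginal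
  symm
  rw [Finset.sum_comm]
  refine Finset.sum_congr rfl fun z₁ _ => ?_
  rw [Finset.sum_comm]
  refine Finset.sum_congr rfl fun z₂ _ => ?_
  have key : ∀ b : Z₂,
      ((∀ j : Fin n, (j : ℕ) < u → z₁ j = w₁ j) ∧
        (∀ j : Fin n, (j : ℕ) < v + 1 → z₂ j = Function.update w₂ ⟨v, hv⟩ b j))
      ↔ (b = z₂ ⟨v, hv⟩ ∧
        ((∀ j : Fin n, (j : ℕ) < u → z₁ j = w₁ j) ∧
          (∀ j : Fin n, (j : ℕ) < v → z₂ j = w₂ j))) := by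
    intro b
    constructor
    · rintro ⟨h1, h2⟩
      have hb := h2 ⟨v, hv⟩ (by simp)
      rw [Function.update_self] at hb
      refine ⟨hb.symm, h1, fun j hj => ?_⟩
      have := h2 j (by omega)
      rwa [Function.update_of_ne (by simp [Fin.ext_iff]; omega)] at this
    · rintro ⟨hb, h1, h2⟩
      refine ⟨h1, fun j hj => ?_⟩
      rcases Nat.lt_or_ge (j : ℕ) v with h | h
      · rw [Function.update_of_ne (by simp [Fin.ext_iff]; omega)]
        exact h2 j h
      · have hjv : j = ⟨v, hv⟩ := by simp [Fin.ext_iff]; omega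
        subst hjv
        rw [Function.update_self]
        exact hb.symm
  simp only [key, ite_and]
  rw [Finset.sum_ite_eq']
  simp only [Finset.mem_univ, if_true]
  split_ifs <;> tauto

lemma prefixMarginal_peel₁ {M₁ M₂ Z₁ Z₂ : Type*}
    [Fintype Z₁] [Fintype Z₂] {n : ℕ}
    (p : M₁ → M₂ → (Fin n → Z₁) → (Fin n → Z₂) → ℝ)
    (u v : ℕ) (hu : u < n)
    (m₁ : M₁) (m₂ : M₂) (w₁ : Fin n → Z₁) (w₂ : Fin n → Z₂) :
    prefixMarginal p u v m₁ m₂ w₁ w₂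
      = ∑ a : Z₁, prefixMarginal p (u + 1) v m₁ m₂ (Function.update w₁ ⟨u, hu⟩ a) w₂ := by
  classical
  unfold prefixMarginal
  symm
  rw [Finset.sum_comm]
  refine Finset.sum_congr rfl fun z₁ _ => ?_
  rw [Finset.sum_comm]
  refine Finset.sum_congr rfl fun z₂ _ => ?_
  have key : ∀ a : Z₁,
      ((∀ j : Fin n, (j : ℕ) < u + 1 → z₁ j = Function.update w₁ ⟨u, hu⟩ a j) ∧
        (∀ j : Fin n, (j : ℕ) < v → z₂ j = w₂ j))
      ↔ (a = z₁ ⟨u, hu⟩ ∧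
        ((∀ j : Fin n, (j : ℕ) < u → z₁ j = w₁ j) ∧
          (∀ j : Fin n, (j : ℕ) < v → z₂ j = w₂ j))) := by
    intro a
    constructor
    · rintro ⟨h1, h2⟩
      have ha := h1 ⟨u, hu⟩ (by simp)
      rw [Function.update_self] at ha
      refine ⟨ha.symm, fun j hj => ?_, h2⟩
      have := h1 j (by omega)
      rwa [Function.update_of_ne (by simp [Fin.ext_iff]; omega)] at this
    · rintro ⟨ha, h1, h2⟩
      refine ⟨fun j hj => ?_, h2⟩
      rcases Nat.lt_or_ge (j : ℕ) u with h | h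
      · rw [Function.update_of_ne (by simp [Fin.ext_iff]; omega)]
        exact h1 j h
      · have hju : j = ⟨u, hu⟩ := by simp [Fin.ext_iff]; omega
        subst hju
        rw [Function.update_self]
        exact ha.symm
  simp only [key, ite_and]
  rw [Finset.sum_ite_eq']
  simp only [Finset.mem_univ, if_true]
  split_ifs <;> tauto

lemma prefixMarginal_prod_base {M₁ M₂ Z₁ Z₂ : Type*}
    [Fintype Z₁] [Fintype Z₂] {n : ℕ}
    (q : Fin n → Z₁ → (Fin n → Z₂) → M₁ → ℝ)
    (r : Fin n → Z₂ → (Fin n → Z₁) → M₂ → ℝ)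
    (m₁ : M₁) (m₂ : M₂) (w₁ : Fin n → Z₁) (w₂ : Fin n → Z₂) :
    prefixMarginal (fun (a : M₁) (b : M₂) (z₁ : Fin n → Z₁) (z₂ : Fin n → Z₂) =>
        (∏ i, q i (z₁ i) z₂ a) * (∏ i, r i (z₂ i) z₁ b)) n n m₁ m₂ w₁ w₂
      = (∏ i ∈ univ.filter (fun i : Fin n => (i : ℕ) < n), q i (w₁ i) w₂ m₁)
        * (∏ i ∈ univ.filter (fun i : Fin n => (i : ℕ) < n), r i (w₂ i) w₁ m₂) := by
  rw [prefixMarginal_base]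
  have hfilter : univ.filter (fun i : Fin n => (i : ℕ) < n) = univ :=
    Finset.filter_true_of_mem (fun i _ => i.isLt)
  simp only [hfilter]

lemma prefixMarginal_prod {M₁ M₂ Z₁ Z₂ : Type*}
    [Fintype Z₁] [Fintype Z₂] {n : ℕ}
    (q : Fin n → Z₁ → (Fin n → Z₂) → M₁ → ℝ)
    (r : Fin n → Z₂ → (Fin n → Z₁) → M₂ → ℝ)
    (hq1 : ∀ i z₂ m₁, ∑ z, q i z z₂ m₁ = 1)
    (hqpre : ∀ (i : Fin n) z z₂ z₂' m₁, (∀ j : Fin n, (j : ℕ) < (i : ℕ) → z₂ j = z₂' j) →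
      q i z z₂ m₁ = q i z z₂' m₁)
    (hr1 : ∀ i z₁ m₂, ∑ z, r i z z₁ m₂ = 1)
    (hrpre : ∀ (i : Fin n) z z₁ z₁' m₂, (∀ j : Fin n, (j : ℕ) < (i : ℕ) → z₁ j = z₁' j) →
      r i z z₁ m₂ = r i z z₁' m₂)
    (m₁ : M₁) (m₂ : M₂) :
    ∀ (k u v : ℕ), (n - u) + (n - v) ≤ k → u ≤ v + 1 → v ≤ u + 1 → u ≤ n → v ≤ n →
    ∀ (w₁ : Fin n → Z₁) (w₂ : Fin n → Z₂),
    prefixMarginal (fun (a : M₁) (b : M₂) (z₁ : Fin n → Z₁) (z₂ : Fin n → Z₂) =>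
        (∏ i, q i (z₁ i) z₂ a) * (∏ i, r i (z₂ i) z₁ b)) u v m₁ m₂ w₁ w₂
      = (∏ i ∈ univ.filter (fun i : Fin n => (i : ℕ) < u), q i (w₁ i) w₂ m₁)
        * (∏ i ∈ univ.filter (fun i : Fin n => (i : ℕ) < v), r i (w₂ i) w₁ m₂) := by
  intro k
  induction k with
  | zero =>
    intro u v hk h1 h2 hu hv w₁ w₂
    have hun : u = n := by omega
    have hvn : v = n := by omega
    subst hun; subst hvn
    exact prefixMarginal_prod_base q r m₁ m₂ w₁ w₂
  | succ k ih =>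
    intro u v hk h1 h2 hu hv w₁ w₂
    rcases Nat.lt_or_ge v u with hvu | huv
    · -- peel a z₂ coordinate at index v
      have hvn : v < n := by omega
      rw [prefixMarginal_peel₂ _ u v hvn]
      have hins : univ.filter (fun i : Fin n => (i : ℕ) < v + 1)
          = insert ⟨v, hvn⟩ (univ.filter fun i : Fin n => (i : ℕ) < v) := by
        ext i
        simp only [mem_filter, mem_insert, mem_univ, true_and, Fin.ext_iff]
        omega
      have hterm : ∀ b : Z₂,
          prefixMarginal (fun (a : M₁) (b : M₂) (z₁ : Fin n → Z₁) (z₂ : Fin n → Z₂) =>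
              (∏ i, q i (z₁ i) z₂ a) * (∏ i, r i (z₂ i) z₁ b)) u (v + 1) m₁ m₂ w₁
              (Function.update w₂ ⟨v, hvn⟩ b)
          = (∏ i ∈ univ.filter (fun i : Fin n => (i : ℕ) < u), q i (w₁ i) w₂ m₁)
            * ((∏ i ∈ univ.filter (fun i : Fin n => (i : ℕ) < v), r i (w₂ i) w₁ m₂)
              * r ⟨v, hvn⟩ b w₁ m₂) := by
        intro b
        rw [ih u (v + 1) (by omega) (by omega) (by omega) hu (by omega)]
        congr 1
        · refine Finset.prod_congr rfl fun i hi => ?_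
          simp only [mem_filter, mem_univ, true_and] at hi
          refine hqpre i (w₁ i) _ w₂ m₁ fun j hj => ?_
          refine Function.update_of_ne ?_ _ _
          simp only [ne_eq, Fin.ext_iff]
          omega
        · rw [hins, Finset.prod_insert (by simp), Function.update_self, mul_comm]
          congr 1
          refine Finset.prod_congr rfl fun i hi => ?_
          simp only [mem_filter, mem_univ, true_and] at hi
          rw [Function.update_of_ne (by simp only [ne_eq, Fin.ext_iff]; omega)]
      simp only [hterm]
      rw [← Finset.mul_sum, ← Finset.mul_sum, hr1 ⟨v, hvn⟩ w₁ m₂, mul_one]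
    · rcases Nat.lt_or_ge u n with hun | hun'
      · -- peel a z₁ coordinate at index u
        rw [prefixMarginal_peel₁ _ u v hun]
        have hins : univ.filter (fun i : Fin n => (i : ℕ) < u + 1)
            = insert ⟨u, hun⟩ (univ.filter fun i : Fin n => (i : ℕ) < u) := by
          ext i
          simp only [mem_filter, mem_insert, mem_univ, true_and, Fin.ext_iff]
          omega
        have hterm : ∀ a : Z₁,
            prefixMarginal (fun (a : M₁) (b : M₂) (z₁ : Fin n → Z₁) (z₂ : Fin n → Z₂) =>
                (∏ i, q i (z₁ i) z₂ a) * (∏ i, r i (z₂ i) z₁ b)) (u + 1) v m₁ m₂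
                (Function.update w₁ ⟨u, hun⟩ a) w₂
            = (q ⟨u, hun⟩ a w₂ m₁
                * (∏ i ∈ univ.filter (fun i : Fin n => (i : ℕ) < u), q i (w₁ i) w₂ m₁))
              * (∏ i ∈ univ.filter (fun i : Fin n => (i : ℕ) < v), r i (w₂ i) w₁ m₂) := by
          intro a
          rw [ih (u + 1) v (by omega) (by omega) (by omega) (by omega) hv]
          congr 1
          · rw [hins, Finset.prod_insert (by simp), Function.update_self]
            congr 1
            refine Finset.prod_congr rfl fun i hi => ?_
            simp only [mem_filter, mem_univ, true_and] at hi
            rw [Function.update_of_ne (by simp only [ne_eq, Fin.ext_iff]; omega)]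
          · refine Finset.prod_congr rfl fun i hi => ?_
            simp only [mem_filter, mem_univ, true_and] at hi
            refine hrpre i (w₂ i) _ w₁ m₂ fun j hj => ?_
            refine Function.update_of_ne ?_ _ _
            simp only [ne_eq, Fin.ext_iff]
            omega
        simp only [hterm]
        rw [← Finset.sum_mul, ← Finset.sum_mul, hq1 ⟨u, hun⟩ w₂ m₁, one_mul]
      · have hun : u = n := by omega
        have hvn : v = n := by omega
        subst hun; subst hvn
        exact prefixMarginal_prod_base q r m₁ m₂ w₁ w₂

/-- If a pmf `p` on `M₁ × M₂ × Z₁ⁿ × Z₂ⁿ` factors as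
`p(m₁,m₂,z₁ⁿ,z₂ⁿ) = p₁(m₁)·p₂(m₂)·∏ᵢ qᵢ(z₁ᵢ | z₂^{i-1}, m₁)·∏ᵢ rᵢ(z₂ᵢ | z₁^{i-1}, m₂)`,
then for all indices `0 ≤ t ≤ s ≤ n` with `s ≤ t + 1`, the messages `M₁` and `M₂` are
conditionally independent given the prefixes `(Z₁^s, Z₂^t)`. -/
theorem messages_condIndep_given_cribbing_prefixes
    {M₁ M₂ Z₁ Z₂ : Type*} [Fintype M₁] [Fintype M₂] [Fintype Z₁] [Fintype Z₂]
    [Nonempty M₁] [Nonempty M₂] [Nonempty Z₁] [Nonempty Z₂]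
    (n : ℕ) (hn : 1 ≤ n)
    (p : M₁ → M₂ → (Fin n → Z₁) → (Fin n → Z₂) → ℝ)
    (p₁ : M₁ → ℝ) (p₂ : M₂ → ℝ)
    (q : Fin n → Z₁ → (Fin n → Z₂) → M₁ → ℝ)
    (r : Fin n → Z₂ → (Fin n → Z₁) → M₂ → ℝ)
    (hp₁0 : ∀ m₁, 0 ≤ p₁ m₁) (hp₁1 : ∑ m₁, p₁ m₁ = 1)
    (hp₂0 : ∀ m₂, 0 ≤ p₂ m₂) (hp₂1 : ∑ m₂, p₂ m₂ = 1)
    (hq0 : ∀ i z z₂ m₁, 0 ≤ q i z z₂ m₁)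
    (hq1 : ∀ i z₂ m₁, ∑ z, q i z z₂ m₁ = 1)
    (hqpre : ∀ (i : Fin n) z z₂ z₂' m₁, (∀ j : Fin n, (j : ℕ) < (i : ℕ) → z₂ j = z₂' j) →
      q i z z₂ m₁ = q i z z₂' m₁)
    (hr0 : ∀ i z z₁ m₂, 0 ≤ r i z z₁ m₂)
    (hr1 : ∀ i z₁ m₂, ∑ z, r i z z₁ m₂ = 1)
    (hrpre : ∀ (i : Fin n) z z₁ z₁' m₂, (∀ j : Fin n, (j : ℕ) < (i : ℕ) → z₁ j = z₁' j) →
      r i z z₁ m₂ = r i z z₁' m₂)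
    (hp : ∀ m₁ m₂ z₁ z₂, p m₁ m₂ z₁ z₂ =
      p₁ m₁ * p₂ m₂ * (∏ i, q i (z₁ i) z₂ m₁) * (∏ i, r i (z₂ i) z₁ m₂)) :
    ∀ (s t : ℕ), t ≤ s → s ≤ n → s ≤ t + 1 →
    ∀ (m₁ : M₁) (m₂ : M₂) (w₁ : Fin n → Z₁) (w₂ : Fin n → Z₂),
      prefixMarginal p s t m₁ m₂ w₁ w₂
          * (∑ a : M₁, ∑ b : M₂, prefixMarginal p s t a b w₁ w₂)
        = (∑ b : M₂, prefixMarginal p s t m₁ b w₁ w₂)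
          * (∑ a : M₁, prefixMarginal p s t a m₂ w₁ w₂) := by
  intro s t hts hsn hst m₁ m₂ w₁ w₂
  classical
  have hfac : ∀ (a : M₁) (b : M₂),
      prefixMarginal p s t a b w₁ w₂
        = (p₁ a * (∏ i ∈ univ.filter (fun i : Fin n => (i : ℕ) < s), q i (w₁ i) w₂ a))
          * (p₂ b * (∏ i ∈ univ.filter (fun i : Fin n => (i : ℕ) < t), r i (w₂ i) w₁ b)) := by
    intro a b
    have h1 : prefixMarginal p s t a b w₁ w₂
        = p₁ a * p₂ b * prefixMarginal (fun (a : M₁) (b : M₂) (z₁ : Fin n → Z₁)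
            (z₂ : Fin n → Z₂) =>
            (∏ i, q i (z₁ i) z₂ a) * (∏ i, r i (z₂ i) z₁ b)) s t a b w₁ w₂ := by
      unfold prefixMarginal
      rw [Finset.mul_sum]
      refine Finset.sum_congr rfl fun z₁ _ => ?_
      rw [Finset.mul_sum]
      refine Finset.sum_congr rfl fun z₂ _ => ?_
      rw [hp]
      split_ifs
      · ring
      · ring
    rw [h1, prefixMarginal_prod q r hq1 hqpre hr1 hrpre a b ((n - s) + (n - t)) s t le_rfl
      hst (by omega) hsn (by omega) w₁ w₂]
    ring
  simp only [hfac]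
  simp only [← Finset.mul_sum, ← Finset.sum_mul]
  ring
end

section
/- Let (U, Z₁, X₁, X₂, Y) be a random vector taking values in a product of nonempty finite sets such that: (i) Z₁ = g(X₁) almost surely for a deterministic function g; (ii) X₂ is conditionally independent of (X₁, Z₁) given U; (iii) Y is conditionally independent of U given (X₁, X₂). Then H(Z₁|U) + I(X₁;Y|X₂,Z₁,U) ≤ H(Z₁|X₂) + I(X₁;Y|X₂,Z₁). -/
open Finset

/-- Probability that the (finitely supported) random variable `X` takes the value `b`,
under the pmf `p` on the finite sample space `Ω`. -/
noncomputable def prob {Ω β : Type*} [Fintype Ω] (p : Ω → ℝ) (X : Ω → β) (b : β) : ℝ :=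
  haveI := Classical.propDecidable
  ∑ ω, if X ω = b then p ω else 0

/-- Shannon entropy `H(X)` (natural logarithm; any fixed base may be used). -/
noncomputable def ent {Ω β : Type*} [Fintype Ω] [Fintype β] (p : Ω → ℝ) (X : Ω → β) : ℝ :=
  -∑ b, prob p X b * Real.log (prob p X b)

/-- Conditional entropy `H(X|Y) = H(X,Y) - H(Y)`. -/
noncomputable def condEnt {Ω β γ : Type*} [Fintype Ω] [Fintype β] [Fintype γ]
    (p : Ω → ℝ) (X : Ω → β) (Y : Ω → γ) : ℝ :=
  ent p (fun ω => (X ω, Y ω)) - ent p Y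

/-- Mutual information `I(X;Y) = H(X) + H(Y) - H(X,Y)`. -/
noncomputable def mutInf {Ω β γ : Type*} [Fintype Ω] [Fintype β] [Fintype γ]
    (p : Ω → ℝ) (X : Ω → β) (Y : Ω → γ) : ℝ :=
  ent p X + ent p Y - ent p (fun ω => (X ω, Y ω))

/-- Conditional mutual information `I(X;Y|Z) = H(X|Z) + H(Y|Z) - H(X,Y|Z)`. -/
noncomputable def condMutInf {Ω β γ δ : Type*} [Fintype Ω] [Fintype β] [Fintype γ] [Fintype δ]
    (p : Ω → ℝ) (X : Ω → β) (Y : Ω → γ) (Z : Ω → δ) : ℝ :=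
  condEnt p X Z + condEnt p Y Z - condEnt p (fun ω => (X ω, Y ω)) Z

/-- `X` is conditionally independent of `Y` given `Z` (under the pmf `p`):
`P(X=x, Y=y, Z=z)·P(Z=z) = P(X=x, Z=z)·P(Y=y, Z=z)` for all `x, y, z`. -/
def CondIndepFun {Ω β γ δ : Type*} [Fintype Ω]
    (p : Ω → ℝ) (X : Ω → β) (Y : Ω → γ) (Z : Ω → δ) : Prop :=
  ∀ (x : β) (y : γ) (z : δ),
    prob p (fun ω => (X ω, Y ω, Z ω)) (x, y, z) * prob p Z z
      = prob p (fun ω => (X ω, Z ω)) (x, z) * prob p (fun ω => (Y ω, Z ω)) (y, z)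

section helpers
open Classical
variable {Ω β γ δ : Type*} [Fintype Ω] (p : Ω → ℝ)

lemma prob_nonneg (hp0 : ∀ ω, 0 ≤ p ω) (X : Ω → β) (b : β) : 0 ≤ prob p X b := by
  unfold prob
  exact Finset.sum_nonneg fun ω _ => by split <;> simp [hp0 ω]

lemma self_le_prob (hp0 : ∀ ω, 0 ≤ p ω) (X : Ω → β) (ω₀ : Ω) : p ω₀ ≤ prob p X (X ω₀) := by
  unfold prob
  have : p ω₀ = if X ω₀ = X ω₀ then p ω₀ else 0 := by simp
  rw [this]
  exact Finset.single_le_sum (f := fun ω => if X ω = X ω₀ then p ω else 0)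
    (fun ω _ => by split <;> simp [hp0 ω]) (Finset.mem_univ ω₀)

lemma prob_pos (hp0 : ∀ ω, 0 ≤ p ω) (X : Ω → β) {ω₀ : Ω} (h : p ω₀ ≠ 0) :
    0 < prob p X (X ω₀) :=
  lt_of_lt_of_le (lt_of_le_of_ne (hp0 ω₀) (Ne.symm h)) (self_le_prob p hp0 X ω₀)

lemma sum_prob (hp1 : ∑ ω, p ω = 1) (X : Ω → β) [Fintype β] : ∑ b, prob p X b = 1 := by
  unfold prob
  rw [Finset.sum_comm]
  simp [Finset.sum_ite_eq, hp1]

lemma sum_prob_mul (X : Ω → β) [Fintype β] (f : β → ℝ) :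
    ∑ b, prob p X b * f b = ∑ ω, p ω * f (X ω) := by
  unfold prob
  simp only [Finset.sum_mul, ite_mul, zero_mul]
  rw [Finset.sum_comm]
  simp [Finset.sum_ite_eq]

lemma ent_eq (X : Ω → β) [Fintype β] :
    ent p X = -∑ ω, p ω * Real.log (prob p X (X ω)) := by
  unfold ent
  rw [sum_prob_mul]

lemma prob_congr {X X' : Ω → β} (h : ∀ ω, p ω ≠ 0 → X ω = X' ω) :
    prob p X = prob p X' := by
  funext b
  unfold prob
  refine Finset.sum_congr rfl fun ω _ => ?_
  by_cases hω : p ω = 0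
  · simp [hω]
  · rw [h ω hω]

lemma ent_congr {X X' : Ω → β} [Fintype β] (h : ∀ ω, p ω ≠ 0 → X ω = X' ω) :
    ent p X = ent p X' := by
  unfold ent
  rw [prob_congr p h]

lemma prob_comp_inj {f : β → γ} (hf : Function.Injective f) (X : Ω → β) (b : β) :
    prob p (fun ω => f (X ω)) (f b) = prob p X b := by
  unfold prob
  refine Finset.sum_congr rfl fun ω _ => ?_
  simp [hf.eq_iff]

lemma ent_comp_inj {f : β → γ} (hf : Function.Injective f) (X : Ω → β)
    [Fintype β] [Fintype γ] :
    ent p (fun ω => f (X ω)) = ent p X := by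
  rw [ent_eq, ent_eq]
  congr 1
  exact Finset.sum_congr rfl fun ω _ => by rw [prob_comp_inj p hf]

lemma prob_le_prob (hp0 : ∀ ω, 0 ≤ p ω) {X : Ω → β} {Y : Ω → γ} {b : β} {c : γ}
    (h : ∀ ω, X ω = b → Y ω = c) : prob p X b ≤ prob p Y c := by
  unfold prob
  refine Finset.sum_le_sum fun ω _ => ?_
  by_cases hx : X ω = b
  · simp [hx, h ω hx]
  · simp only [hx, if_false]
    split <;> simp [hp0 ω]

lemma prob_pair_sum (T : Ω → β) (S : Ω → γ) [Fintype γ] (b : β) :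
    ∑ c, prob p (fun ω => (T ω, S ω)) (b, c) = prob p T b := by
  unfold prob
  rw [Finset.sum_comm]
  refine Finset.sum_congr rfl fun ω _ => ?_
  simp [Prod.ext_iff, ite_and, Finset.sum_ite_eq']

end helpers

section main2
variable {Ω β γ δ : Type*} [Fintype Ω] (p : Ω → ℝ)

lemma ent_condIndep [Fintype β] [Fintype γ] [Fintype δ]
    (hp0 : ∀ ω, 0 ≤ p ω) {X : Ω → β} {Y : Ω → γ} {Z : Ω → δ}
    (h : CondIndepFun p X Y Z) :
    ent p (fun ω => (X ω, Y ω, Z ω)) + ent p Z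
      = ent p (fun ω => (X ω, Z ω)) + ent p (fun ω => (Y ω, Z ω)) := by
  rw [ent_eq, ent_eq, ent_eq, ent_eq, ← neg_add, ← neg_add, neg_inj,
    ← Finset.sum_add_distrib, ← Finset.sum_add_distrib]
  refine Finset.sum_congr rfl fun ω _ => ?_
  by_cases hω : p ω = 0
  · simp [hω]
  · have h1 := prob_pos p hp0 (fun ω => (X ω, Y ω, Z ω)) hω
    have h2 := prob_pos p hp0 Z hω
    have h3 := prob_pos p hp0 (fun ω => (X ω, Z ω)) hω
    have h4 := prob_pos p hp0 (fun ω => (Y ω, Z ω)) hω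
    rw [← mul_add, ← mul_add, ← Real.log_mul h1.ne' h2.ne', ← Real.log_mul h3.ne' h4.ne',
      h (X ω) (Y ω) (Z ω)]

lemma ent_submodular [Fintype β] [Fintype γ] [Fintype δ]
    (hp0 : ∀ ω, 0 ≤ p ω) (hp1 : ∑ ω, p ω = 1) (A : Ω → β) (B : Ω → γ) (C : Ω → δ) :
    ent p (fun ω => (A ω, B ω, C ω)) + ent p B
      ≤ ent p (fun ω => (A ω, B ω)) + ent p (fun ω => (B ω, C ω)) := by
  set PABC := prob p (fun ω => (A ω, B ω, C ω)) with hPABC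
  set PAB := prob p (fun ω => (A ω, B ω)) with hPAB
  set PBC := prob p (fun ω => (B ω, C ω)) with hPBC
  set PB := prob p B with hPB
  set G : β × γ × δ → ℝ := fun v => PAB (v.1, v.2.1) * PBC (v.2.1, v.2.2) / (PABC v * PB v.2.1)
    with hG
  have hGnn : ∀ v, 0 ≤ G v := fun v => by
    apply div_nonneg (mul_nonneg (prob_nonneg p hp0 _ _) (prob_nonneg p hp0 _ _))
      (mul_nonneg (prob_nonneg p hp0 _ _) (prob_nonneg p hp0 _ _))
  -- step 1: difference equals sum of p ω * log (G v)
  have key : ent p (fun ω => (A ω, B ω, C ω)) + ent p B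
      - ent p (fun ω => (A ω, B ω)) - ent p (fun ω => (B ω, C ω))
      = ∑ ω, p ω * Real.log (G (A ω, B ω, C ω)) := by
    rw [ent_eq, ent_eq, ent_eq, ent_eq]
    have step : ∀ ω ∈ Finset.univ (α := Ω), p ω * Real.log (G (A ω, B ω, C ω))
        = p ω * Real.log (PAB (A ω, B ω)) + p ω * Real.log (PBC (B ω, C ω))
          - p ω * Real.log (PABC (A ω, B ω, C ω)) - p ω * Real.log (PB (B ω)) := by
      intro ω _
      by_cases hω : p ω = 0
      · simp [hω]
      · have h1 := prob_pos p hp0 (fun ω => (A ω, B ω, C ω)) hω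
        have h2 := prob_pos p hp0 B hω
        have h3 := prob_pos p hp0 (fun ω => (A ω, B ω)) hω
        have h4 := prob_pos p hp0 (fun ω => (B ω, C ω)) hω
        rw [hG]
        dsimp only
        rw [Real.log_div (by positivity) (by positivity), Real.log_mul h3.ne' h4.ne',
          Real.log_mul h1.ne' h2.ne']
        ring
    rw [Finset.sum_congr rfl step]
    simp only [Finset.sum_sub_distrib, Finset.sum_add_distrib]
    ring
  -- step 2: pointwise log bound, and total mass bound
  have mass : ∑ ω, p ω * G (A ω, B ω, C ω) ≤ 1 := by
    rw [← sum_prob_mul]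
    have tw : ∀ v ∈ Finset.univ (α := β × γ × δ),
        PABC v * G v ≤ PAB (v.1, v.2.1) * PBC (v.2.1, v.2.2) / PB v.2.1 := by
      intro v _
      by_cases h0 : PABC v = 0
      · rw [h0, zero_mul]
        exact div_nonneg (mul_nonneg (prob_nonneg p hp0 _ _) (prob_nonneg p hp0 _ _))
          (prob_nonneg p hp0 _ _)
      · have hBpos : 0 < PB v.2.1 := by
          rcases lt_or_eq_of_le (prob_nonneg p hp0 (fun ω => (A ω, B ω, C ω)) v) with hlt | heq
          · exact lt_of_lt_of_le hlt (prob_le_prob p hp0 fun ω hv => by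
              obtain ⟨v1, v2, v3⟩ := v
              simp_all [Prod.ext_iff])
          · exact absurd heq.symm h0
        have hApos : 0 < PABC v := lt_of_le_of_ne (prob_nonneg p hp0 _ _) (Ne.symm h0)
        rw [hG]
        dsimp only
        rw [mul_div_assoc']
        rw [div_le_div_iff₀ (mul_pos hApos hBpos) hBpos]
        ring_nf
        nlinarith [prob_nonneg p hp0 (fun ω => (A ω, B ω)) (v.1, v.2.1),
          prob_nonneg p hp0 (fun ω => (B ω, C ω)) (v.2.1, v.2.2)]
    refine le_trans (Finset.sum_le_sum tw) ?_
    have hABm : ∀ v2, ∑ v1, PAB (v1, v2) = PB v2 := by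
      intro v2
      have swp : ∀ v1, PAB (v1, v2) = prob p (fun ω => (B ω, A ω)) (v2, v1) := by
        intro v1
        rw [hPAB]
        unfold prob
        refine Finset.sum_congr rfl fun ω _ => ?_
        by_cases h1 : A ω = v1 <;> by_cases h2 : B ω = v2 <;>
          simp [Prod.ext_iff, h1, h2]
      simp only [swp]
      exact prob_pair_sum p B A v2
    have hBCm : ∀ v2, ∑ v3, PBC (v2, v3) = PB v2 := fun v2 => prob_pair_sum p B C v2
    calc ∑ v : β × γ × δ, PAB (v.1, v.2.1) * PBC (v.2.1, v.2.2) / PB v.2.1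
        = ∑ v2, ∑ v1, ∑ v3, PAB (v1, v2) * PBC (v2, v3) / PB v2 := by
          rw [Fintype.sum_prod_type]
          simp only [Fintype.sum_prod_type]
          rw [Finset.sum_comm]
      _ = ∑ v2, (∑ v1, PAB (v1, v2)) * (∑ v3, PBC (v2, v3)) / PB v2 := by
          refine Finset.sum_congr rfl fun v2 _ => ?_
          rw [Finset.sum_mul, Finset.sum_div]
          refine Finset.sum_congr rfl fun v1 _ => ?_
          rw [Finset.mul_sum, Finset.sum_div]
      _ = ∑ v2, PB v2 * PB v2 / PB v2 := by simp [hABm, hBCm]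
      _ ≤ ∑ v2, PB v2 := by
          refine Finset.sum_le_sum fun v2 _ => ?_
          by_cases h : PB v2 = 0
          · simp [h]
          · rw [mul_div_assoc, div_self h, mul_one]
      _ = 1 := sum_prob p hp1 B
  -- step 3: conclude
  have tb : ∀ ω ∈ Finset.univ (α := Ω),
      p ω * Real.log (G (A ω, B ω, C ω)) ≤ p ω * (G (A ω, B ω, C ω) - 1) := by
    intro ω _
    by_cases hω : p ω = 0
    · simp [hω]
    · have h1 := prob_pos p hp0 (fun ω => (A ω, B ω, C ω)) hω
      have h2 := prob_pos p hp0 B hω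
      have h3 := prob_pos p hp0 (fun ω => (A ω, B ω)) hω
      have h4 := prob_pos p hp0 (fun ω => (B ω, C ω)) hω
      have hGpos : 0 < G (A ω, B ω, C ω) := by
        rw [hG]
        dsimp only
        positivity
      exact mul_le_mul_of_nonneg_left (Real.log_le_sub_one_of_pos hGpos) (hp0 ω)
  have final : ∑ ω, p ω * Real.log (G (A ω, B ω, C ω)) ≤ 0 := by
    refine le_trans (Finset.sum_le_sum tb) ?_
    have : ∑ ω, p ω * (G (A ω, B ω, C ω) - 1)
        = (∑ ω, p ω * G (A ω, B ω, C ω)) - 1 := by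
      simp only [mul_sub, mul_one, Finset.sum_sub_distrib, hp1]
    rw [this]
    linarith
  linarith [key, final]
end main2

section main3
variable {Ω : Type*} [Fintype Ω] (p : Ω → ℝ)

lemma condIndep_marg {β γ1 γ2 δ : Type*} [Fintype γ1]
    (X : Ω → β) (Y1 : Ω → γ1) (Y2 : Ω → γ2) (Z : Ω → δ)
    (h : CondIndepFun p X (fun ω => (Y1 ω, Y2 ω)) Z) :
    CondIndepFun p X Y2 Z := by
  classical
  intro x y2 z
  have m1 : prob p (fun ω => (X ω, Y2 ω, Z ω)) (x, y2, z)
      = ∑ y1, prob p (fun ω => (X ω, (Y1 ω, Y2 ω), Z ω)) (x, (y1, y2), z) := by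
    unfold prob
    rw [Finset.sum_comm]
    refine Finset.sum_congr rfl fun ω _ => ?_
    by_cases h1 : X ω = x <;> by_cases h2 : Y2 ω = y2 <;> by_cases h3 : Z ω = z <;>
      simp [Prod.ext_iff, h1, h2, h3, Finset.sum_ite_eq]
  have m2 : prob p (fun ω => (Y2 ω, Z ω)) (y2, z)
      = ∑ y1, prob p (fun ω => ((Y1 ω, Y2 ω), Z ω)) ((y1, y2), z) := by
    unfold prob
    rw [Finset.sum_comm]
    refine Finset.sum_congr rfl fun ω _ => ?_
    by_cases h2 : Y2 ω = y2 <;> by_cases h3 : Z ω = z <;>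
      simp [Prod.ext_iff, h2, h3, Finset.sum_ite_eq]
  rw [m1, m2, Finset.sum_mul, Finset.mul_sum]
  exact Finset.sum_congr rfl fun y1 _ => h x (y1, y2) z

end main3


/-- For a random vector `(U, Z₁, X₁, X₂, Y)` over finite sets with
(i) `Z₁ = g(X₁)` a.s., (ii) `X₂` conditionally independent of `(X₁, Z₁)` given `U`,
(iii) `Y` conditionally independent of `U` given `(X₁, X₂)`, one has
`H(Z₁|U) + I(X₁;Y|X₂,Z₁,U) ≤ H(Z₁|X₂) + I(X₁;Y|X₂,Z₁)`. -/
theorem condEnt_add_condMutInf_le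
    {U Z₁ X₁ X₂ Y : Type*} [Fintype U] [Fintype Z₁] [Fintype X₁] [Fintype X₂] [Fintype Y]
    [Nonempty U] [Nonempty Z₁] [Nonempty X₁] [Nonempty X₂] [Nonempty Y]
    (p : U × Z₁ × X₁ × X₂ × Y → ℝ)
    (hp0 : ∀ ω, 0 ≤ p ω) (hp1 : ∑ ω, p ω = 1)
    (g : X₁ → Z₁)
    (hdet : ∀ ω, p ω ≠ 0 → ω.2.1 = g ω.2.2.1)
    (hci1 : CondIndepFun p (fun ω => ω.2.2.2.1) (fun ω => (ω.2.2.1, ω.2.1)) (fun ω => ω.1))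
    (hci2 : CondIndepFun p (fun ω => ω.2.2.2.2) (fun ω => ω.1)
      (fun ω => (ω.2.2.1, ω.2.2.2.1))) :
    condEnt p (fun ω => ω.2.1) (fun ω => ω.1)
        + condMutInf p (fun ω => ω.2.2.1) (fun ω => ω.2.2.2.2)
            (fun ω => (ω.2.2.2.1, ω.2.1, ω.1))
      ≤ condEnt p (fun ω => ω.2.1) (fun ω => ω.2.2.2.1)
        + condMutInf p (fun ω => ω.2.2.1) (fun ω => ω.2.2.2.2)
            (fun ω => (ω.2.2.2.1, ω.2.1)) := by
  classical
  simp only [condEnt, condMutInf]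
  -- hA : from hci1 marginalized to X₂ ⫫ Z₁ | U
  have hA : ent p (fun ω => (ω.2.2.2.1, ω.2.1, ω.1)) + ent p (fun ω => ω.1)
      = ent p (fun ω => (ω.2.2.2.1, ω.1)) + ent p (fun ω => (ω.2.1, ω.1)) := by
    refine ent_condIndep p hp0 ?_
    exact condIndep_marg p (fun ω => ω.2.2.2.1) (fun ω => ω.2.2.1) (fun ω => ω.2.1)
      (fun ω => ω.1) hci1
  -- hB : from hci2
  have hB : ent p (fun ω => (ω.2.2.2.2, ω.1, ω.2.2.1, ω.2.2.2.1))
        + ent p (fun ω => (ω.2.2.1, ω.2.2.2.1))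
      = ent p (fun ω => (ω.2.2.2.2, ω.2.2.1, ω.2.2.2.1))
        + ent p (fun ω => (ω.1, ω.2.2.1, ω.2.2.2.1)) :=
    ent_condIndep p hp0 hci2
  -- hC : submodularity with A = (Y,Z₁), B = X₂, C = U
  have hC : ent p (fun ω => ((ω.2.2.2.2, ω.2.1), ω.2.2.2.1, ω.1)) + ent p (fun ω => ω.2.2.2.1)
      ≤ ent p (fun ω => ((ω.2.2.2.2, ω.2.1), ω.2.2.2.1))
        + ent p (fun ω => (ω.2.2.2.1, ω.1)) :=
    ent_submodular p hp0 hp1 (fun ω => (ω.2.2.2.2, ω.2.1)) (fun ω => ω.2.2.2.1) (fun ω => ω.1)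
  -- e3 : H(X₁,X₂,Z₁,U) = H(U,X₁,X₂)
  have e3 : ent p (fun ω => (ω.2.2.1, ω.2.2.2.1, ω.2.1, ω.1))
      = ent p (fun ω => (ω.1, ω.2.2.1, ω.2.2.2.1)) := by
    have h1 : ent p (fun ω => (ω.2.2.1, ω.2.2.2.1, ω.2.1, ω.1))
        = ent p (fun ω => (ω.2.2.1, ω.2.2.2.1, g ω.2.2.1, ω.1)) :=
      ent_congr p fun ω h => by rw [hdet ω h]
    rw [h1]
    exact ent_comp_inj p (f := fun v : U × X₁ × X₂ => (v.2.1, v.2.2, g v.2.1, v.1))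
      (by rintro ⟨a, b, c⟩ ⟨a', b', c'⟩ h; simp_all [Prod.ext_iff])
      (fun ω => (ω.1, ω.2.2.1, ω.2.2.2.1))
  -- e4 : H(Y,X₂,Z₁,U) = H((Y,Z₁),X₂,U)
  have e4 : ent p (fun ω => (ω.2.2.2.2, ω.2.2.2.1, ω.2.1, ω.1))
      = ent p (fun ω => ((ω.2.2.2.2, ω.2.1), ω.2.2.2.1, ω.1)) :=
    ent_comp_inj p (f := fun v : (Y × Z₁) × X₂ × U => (v.1.1, v.2.1, v.1.2, v.2.2))
      (by rintro ⟨⟨a, b⟩, c, d⟩ ⟨⟨a', b'⟩, c', d'⟩ h; simp_all [Prod.ext_iff])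
      (fun ω => ((ω.2.2.2.2, ω.2.1), ω.2.2.2.1, ω.1))
  -- e6 : H((X₁,Y),X₂,Z₁,U) = H(Y,U,X₁,X₂)
  have e6 : ent p (fun ω => ((ω.2.2.1, ω.2.2.2.2), ω.2.2.2.1, ω.2.1, ω.1))
      = ent p (fun ω => (ω.2.2.2.2, ω.1, ω.2.2.1, ω.2.2.2.1)) := by
    have h1 : ent p (fun ω => ((ω.2.2.1, ω.2.2.2.2), ω.2.2.2.1, ω.2.1, ω.1))
        = ent p (fun ω => ((ω.2.2.1, ω.2.2.2.2), ω.2.2.2.1, g ω.2.2.1, ω.1)) :=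
      ent_congr p fun ω h => by rw [hdet ω h]
    rw [h1]
    exact ent_comp_inj p
      (f := fun v : Y × U × X₁ × X₂ => ((v.2.2.1, v.1), v.2.2.2, g v.2.2.1, v.2.1))
      (by rintro ⟨a, b, c, d⟩ ⟨a', b', c', d'⟩ h; simp_all [Prod.ext_iff])
      (fun ω => (ω.2.2.2.2, ω.1, ω.2.2.1, ω.2.2.2.1))
  -- e9 : H(X₁,X₂,Z₁) = H(X₁,X₂)
  have e9 : ent p (fun ω => (ω.2.2.1, ω.2.2.2.1, ω.2.1))
      = ent p (fun ω => (ω.2.2.1, ω.2.2.2.1)) := by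
    have h1 : ent p (fun ω => (ω.2.2.1, ω.2.2.2.1, ω.2.1))
        = ent p (fun ω => (ω.2.2.1, ω.2.2.2.1, g ω.2.2.1)) :=
      ent_congr p fun ω h => by rw [hdet ω h]
    rw [h1]
    exact ent_comp_inj p (f := fun v : X₁ × X₂ => (v.1, v.2, g v.1))
      (by rintro ⟨a, b⟩ ⟨a', b'⟩ h; simp_all [Prod.ext_iff])
      (fun ω => (ω.2.2.1, ω.2.2.2.1))
  -- e10 : H(Y,X₂,Z₁) = H((Y,Z₁),X₂)
  have e10 : ent p (fun ω => (ω.2.2.2.2, ω.2.2.2.1, ω.2.1))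
      = ent p (fun ω => ((ω.2.2.2.2, ω.2.1), ω.2.2.2.1)) :=
    ent_comp_inj p (f := fun v : (Y × Z₁) × X₂ => (v.1.1, v.2, v.1.2))
      (by rintro ⟨⟨a, b⟩, c⟩ ⟨⟨a', b'⟩, c'⟩ h; simp_all [Prod.ext_iff])
      (fun ω => ((ω.2.2.2.2, ω.2.1), ω.2.2.2.1))
  -- e12 : H((X₁,Y),X₂,Z₁) = H(Y,X₁,X₂)
  have e12 : ent p (fun ω => ((ω.2.2.1, ω.2.2.2.2), ω.2.2.2.1, ω.2.1))
      = ent p (fun ω => (ω.2.2.2.2, ω.2.2.1, ω.2.2.2.1)) := by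
    have h1 : ent p (fun ω => ((ω.2.2.1, ω.2.2.2.2), ω.2.2.2.1, ω.2.1))
        = ent p (fun ω => ((ω.2.2.1, ω.2.2.2.2), ω.2.2.2.1, g ω.2.2.1)) :=
      ent_congr p fun ω h => by rw [hdet ω h]
    rw [h1]
    exact ent_comp_inj p (f := fun v : Y × X₁ × X₂ => ((v.2.1, v.1), v.2.2, g v.2.1))
      (by rintro ⟨a, b, c⟩ ⟨a', b', c'⟩ h; simp_all [Prod.ext_iff])
      (fun ω => (ω.2.2.2.2, ω.2.2.1, ω.2.2.2.1))
  -- e7 : H(Z₁,X₂) = H(X₂,Z₁)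
  have e7 : ent p (fun ω => (ω.2.1, ω.2.2.2.1))
      = ent p (fun ω => (ω.2.2.2.1, ω.2.1)) :=
    ent_comp_inj p (f := fun v : X₂ × Z₁ => (v.2, v.1))
      (by rintro ⟨a, b⟩ ⟨a', b'⟩ h; simp_all [Prod.ext_iff])
      (fun ω => (ω.2.2.2.1, ω.2.1))
  linarith [hA, hB, hC, e3, e4, e6, e9, e10, e12, e7]
end

section
/- Let H_b : [0,1] → ℝ be the binary entropy function in base 2, H_b(p) = -p·log₂ p - (1-p)·log₂(1-p) with the convention 0·log₂ 0 = 0. Then the maximum over α ∈ [0,1] of min(α, H_b((1+α)/2) + α - 1) equals H_b(1/5) - 2/5, and it is attained at α = 3/5. -/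
/-- The binary entropy function in base 2, `H_b(p) = -p·log₂ p - (1-p)·log₂(1-p)`,
with the convention `0·log₂ 0 = 0` (Mathlib's `Real.logb` satisfies `logb 2 0 = 0`). -/
noncomputable def binEnt (p : ℝ) : ℝ := -p * Real.logb 2 p - (1 - p) * Real.logb 2 (1 - p)

lemma mul_log_ge (x q : ℝ) (hx : 0 ≤ x) (hq : 0 < q) :
    x * Real.log q + x - q ≤ x * Real.log x := by
  rcases eq_or_lt_of_le hx with h | h
  · simp [← h]; positivity
  · have h1 : Real.log (q / x) ≤ q / x - 1 := Real.log_le_sub_one_of_pos (by positivity)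
    rw [Real.log_div (ne_of_gt hq) (ne_of_gt h)] at h1
    have := mul_le_mul_of_nonneg_left h1 hx
    rw [mul_sub, mul_sub, mul_div_cancel₀ _ (ne_of_gt h)] at this
    linarith

lemma binEnt_le (p : ℝ) (hp0 : 0 ≤ p) (hp1 : p ≤ 1) :
    binEnt p ≤ Real.logb 2 5 - 2 * p := by
  have L2 : (0:ℝ) < Real.log 2 := Real.log_pos (by norm_num)
  have h1 := mul_log_ge p (4/5) hp0 (by norm_num)
  have h2 := mul_log_ge (1 - p) (1/5) (by linarith) (by norm_num)
  have l45 : Real.log (4/5 : ℝ) = 2 * Real.log 2 - Real.log 5 := by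
    rw [Real.log_div (by norm_num) (by norm_num), show (4:ℝ) = 2^2 by norm_num,
      Real.log_pow]; push_cast; ring
  have l15 : Real.log (1/5 : ℝ) = -Real.log 5 := by
    rw [one_div, Real.log_inv]
  rw [l45] at h1; rw [l15] at h2
  have key : -p * Real.log p - (1 - p) * Real.log (1 - p) ≤ Real.log 5 - 2 * p * Real.log 2 := by
    nlinarith
  have : binEnt p = (-p * Real.log p - (1 - p) * Real.log (1 - p)) / Real.log 2 := by
    unfold binEnt Real.logb; field_simp
  rw [this, Real.logb, div_sub' (ne_of_gt L2), div_le_div_iff_of_pos_right L2]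
  nlinarith

lemma binEnt_fourfifth : binEnt (4/5 : ℝ) = Real.logb 2 5 - 8/5 := by
  have L2 : (0:ℝ) < Real.log 2 := Real.log_pos (by norm_num)
  have l45 : Real.log (4/5 : ℝ) = 2 * Real.log 2 - Real.log 5 := by
    rw [Real.log_div (by norm_num) (by norm_num), show (4:ℝ) = 2^2 by norm_num,
      Real.log_pow]; push_cast; ring
  have l15 : Real.log (1/5 : ℝ) = -Real.log 5 := by rw [one_div, Real.log_inv]
  unfold binEnt Real.logb
  rw [show (1:ℝ) - 4/5 = 1/5 by norm_num, l45, l15]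
  field_simp; ring

lemma binEnt_fifth : binEnt (1/5 : ℝ) = Real.logb 2 5 - 8/5 := by
  have : binEnt (1/5 : ℝ) = binEnt (4/5 : ℝ) := by
    unfold binEnt; norm_num; ring
  rw [this, binEnt_fourfifth]

lemma logb_le : Real.logb 2 5 ≤ 13/5 := by
  have L2 : (0:ℝ) < Real.log 2 := Real.log_pos (by norm_num)
  rw [Real.logb, div_le_iff₀ L2]
  have : Real.log (5^5 : ℝ) ≤ Real.log (2^13 : ℝ) :=
    Real.log_le_log (by positivity) (by norm_num)
  rw [Real.log_pow, Real.log_pow] at this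
  push_cast at this
  linarith

/-- The maximum over `α ∈ [0,1]` of `min(α, H_b((1+α)/2) + α - 1)` equals
`H_b(1/5) - 2/5`, and it is attained at `α = 3/5`. -/
theorem max_min_eq_binEnt_fifth :
    IsGreatest ((fun α : ℝ => min α (binEnt ((1 + α) / 2) + α - 1)) '' Set.Icc (0 : ℝ) 1)
      (binEnt (1 / 5) - 2 / 5)
    ∧ min ((3 : ℝ) / 5) (binEnt ((1 + 3 / 5) / 2) + 3 / 5 - 1) = binEnt (1 / 5) - 2 / 5 := by
  have hval : min ((3 : ℝ) / 5) (binEnt ((1 + 3 / 5) / 2) + 3 / 5 - 1) = binEnt (1 / 5) - 2 / 5 := by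
    rw [show ((1:ℝ) + 3 / 5) / 2 = 4/5 by norm_num, binEnt_fourfifth, binEnt_fifth]
    rw [min_eq_right (by linarith [logb_le])]
    ring
  refine ⟨⟨⟨3/5, ⟨by norm_num, by norm_num⟩, hval⟩, ?_⟩, hval⟩
  rintro y ⟨α, ⟨h0, h1⟩, rfl⟩
  simp only
  calc min α (binEnt ((1 + α) / 2) + α - 1) ≤ binEnt ((1 + α) / 2) + α - 1 := min_le_right _ _
    _ ≤ (Real.logb 2 5 - 2 * ((1 + α) / 2)) + α - 1 := by
        have := binEnt_le ((1 + α) / 2) (by linarith) (by linarith)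
        linarith
    _ = binEnt (1/5) - 2/5 := by rw [binEnt_fifth]; ring
end

section
/- Let H_b : [0,1] → ℝ be the binary entropy function in base 2, H_b(p) = -p·log₂ p - (1-p)·log₂(1-p) with the convention 0·log₂ 0 = 0. Then there exists a unique α* ∈ (0,1] with H_b(α*) = α*, and the maximum over α ∈ [0,1] of min(α, H_b(α)) equals α* and is attained at α = α*. -/
open Real Set

lemma binEnt_eq (p : ℝ) : binEnt p = Real.binEntropy p / Real.log 2 := by
  unfold binEnt Real.binEntropy
  rw [Real.log_inv, Real.log_inv, Real.logb, Real.logb]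
  ring

lemma log2_pos : (0:ℝ) < Real.log 2 := Real.log_pos (by norm_num)

lemma binEnt_zero : binEnt 0 = 0 := by simp [binEnt_eq]
lemma binEnt_one : binEnt 1 = 0 := by simp [binEnt_eq]
lemma binEnt_half : binEnt 2⁻¹ = 1 := by
  rw [binEnt_eq, Real.binEntropy_two_inv, div_self log2_pos.ne']

lemma binEnt_cont : Continuous binEnt := by
  have : Continuous fun p => Real.binEntropy p / Real.log 2 :=
    Real.binEntropy_continuous.div_const _
  exact this.congr fun p => (binEnt_eq p).symm

lemma binEnt_mul_lt {b t : ℝ} (hb0 : 0 < b) (hb1 : b ≤ 1) (ht0 : 0 < t) (ht1 : t < 1) :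
    t * binEnt b < binEnt (t * b) := by
  have h := Real.strictConcave_binEntropy.2
    (show (0:ℝ) ∈ Icc (0:ℝ) 1 from ⟨le_refl 0, zero_le_one⟩)
    (show b ∈ Icc (0:ℝ) 1 from ⟨hb0.le, hb1⟩) hb0.ne
    (show (0:ℝ) < 1 - t by linarith) ht0 (by ring)
  simp only [smul_eq_mul, mul_zero, zero_add, Real.binEntropy_zero] at h
  rw [binEnt_eq, binEnt_eq, mul_div_assoc']
  exact (div_lt_div_iff_of_pos_right log2_pos).mpr h

lemma binEnt_antiOn : StrictAntiOn binEnt (Icc 2⁻¹ 1) := by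
  intro x hx y hy hxy
  rw [binEnt_eq, binEnt_eq]
  exact (div_lt_div_iff_of_pos_right log2_pos).mpr (Real.binEntropy_strictAntiOn hx hy hxy)

/-- any fixed point in (0,1] is > 1/2 -/
lemma fixed_gt_half {a : ℝ} (ha : a ∈ Set.Ioc (0:ℝ) 1) (hfa : binEnt a = a) : 2⁻¹ < a := by
  by_contra h
  push_neg at h
  rcases lt_or_eq_of_le h with h' | h'
  · have key := binEnt_mul_lt (b := 2⁻¹) (t := 2 * a) (by norm_num) (by norm_num)
      (by linarith [ha.1]) (by linarith)
    rw [binEnt_half, mul_one] at key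
    have he : (2:ℝ) * a * 2⁻¹ = a := by ring
    rw [he, hfa] at key
    linarith [ha.1]
  · rw [h', binEnt_half] at hfa; norm_num at hfa

/-- There is a unique `α* ∈ (0,1]` with `H_b(α*) = α*`, and the maximum
over `α ∈ [0,1]` of `min(α, H_b(α))` equals `α*` and is attained at `α = α*`. -/
theorem max_min_self_binEnt :
    (∃! a : ℝ, a ∈ Set.Ioc (0 : ℝ) 1 ∧ binEnt a = a)
    ∧ ∀ a : ℝ, a ∈ Set.Ioc (0 : ℝ) 1 → binEnt a = a →
        IsGreatest ((fun α : ℝ => min α (binEnt α)) '' Set.Icc (0 : ℝ) 1) a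
        ∧ min a (binEnt a) = a := by
  -- existence via IVT on [1/2, 1]
  have hex : ∃ a ∈ Icc (2⁻¹:ℝ) 1, binEnt a - a = 0 := by
    have hcont : ContinuousOn (fun x => binEnt x - x) (Icc (2⁻¹:ℝ) 1) :=
      (binEnt_cont.sub continuous_id).continuousOn
    have h0 : (0:ℝ) ∈ Icc ((fun x => binEnt x - x) 1) ((fun x => binEnt x - x) 2⁻¹) := by
      simp [binEnt_one, binEnt_half]; norm_num
    obtain ⟨a, ha, hfa⟩ := intermediate_value_Icc' (by norm_num : (2⁻¹:ℝ) ≤ 1) hcont h0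
    exact ⟨a, ha, hfa⟩
  obtain ⟨a, ha, hfa0⟩ := hex
  have hfa : binEnt a = a := by linarith [sub_eq_zero.mp hfa0]
  have haIoc : a ∈ Set.Ioc (0:ℝ) 1 := ⟨by linarith [ha.1], ha.2⟩
  -- uniqueness
  have huniq : ∀ b ∈ Set.Ioc (0:ℝ) 1, binEnt b = b → ∀ c ∈ Set.Ioc (0:ℝ) 1, binEnt c = c →
      b = c := by
    have key : ∀ b ∈ Set.Ioc (0:ℝ) 1, binEnt b = b → ∀ c ∈ Set.Ioc (0:ℝ) 1, binEnt c = c →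
        ¬ b < c := by
      intro b hb hfb c hc hfc hlt
      have hc0 : (0:ℝ) < c := hc.1
      have ht0 : 0 < b / c := div_pos hb.1 hc0
      have ht1 : b / c < 1 := (div_lt_one hc0).mpr hlt
      have := binEnt_mul_lt (b := c) (t := b / c) hc0 hc.2 ht0 ht1
      rw [hfc, div_mul_cancel₀ _ hc0.ne', hfb] at this
      exact lt_irrefl b this
    intro b hb hfb c hc hfc
    rcases lt_trichotomy b c with h | h | h
    · exact absurd h (key b hb hfb c hc hfc)
    · exact h
    · exact absurd h (key c hc hfc b hb hfb)
  refine ⟨⟨a, ⟨haIoc, hfa⟩, fun b hb => huniq b hb.1 hb.2 a haIoc hfa⟩, ?_⟩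
  intro b hbIoc hfb
  have hbhalf := fixed_gt_half hbIoc hfb
  have hmin : min b (binEnt b) = b := by rw [hfb, min_self]
  refine ⟨⟨⟨b, ⟨by linarith, hbIoc.2⟩, hmin⟩, ?_⟩, hmin⟩
  rintro y ⟨α, hα, rfl⟩
  rcases le_or_gt α b with h | h
  · exact le_trans (min_le_left _ _) h
  · refine le_trans (min_le_right _ _) ?_
    have : binEnt α < binEnt b :=
      binEnt_antiOn ⟨hbhalf.le, hbIoc.2⟩ ⟨by linarith, hα.2⟩ h
    rw [hfb] at this
    exact this.le
end
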